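/- Let G be a group and let σ_1, …, σ_{2m−1} ∈ G satisfy the braid relations. Set W = (Δ′_m)^{−1} (Δ_m)^{−1} Θ_m. Then for every product b = σ_{i_1}^{ε_1} σ_{i_2}^{ε_2} ⋯ σ_{i_k}^{ε_k} with 1 ≤ i_j ≤ m−1 and ε_j ∈ {+1, −1}, one has b · W = W · σ_{2m−i_1}^{ε_1} σ_{2m−i_2}^{ε_2} ⋯ σ_{2m−i_k}^{ε_k}. That is, conjugation by W carries a braid word b on the first block of m strands to the word ι^0_m(b̄*) on the last block of m strands, where b̄* replaces each letter σ_i^{ε} of b by σ_{m−i}^{ε} and ι^0_m shifts all indices by m. -/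

import Mathlib

/-- `PiUp σ m i = σ (m+1) * σ (m+2) * ⋯ * σ (m+i)`. -/
def PiUp {G : Type*} [Group G] (σ : ℕ → G) (m i : ℕ) : G :=
  ((List.range i).map (fun k => σ (m + 1 + k))).prod

/-- `PiDown σ m i = σ (m-1) * σ (m-2) * ⋯ * σ (m-i)`. -/
def PiDown {G : Type*} [Group G] (σ : ℕ → G) (m i : ℕ) : G :=
  ((List.range i).map (fun k => σ (m - 1 - k))).prod

/-- `DeltaUp σ m = Π^m_{m-1} * Π^m_{m-2} * ⋯ * Π^m_1`. -/
def DeltaUp {G : Type*} [Group G] (σ : ℕ → G) (m : ℕ) : G :=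
  ((List.range (m - 1)).map (fun k => PiUp σ m (m - 1 - k))).prod

/-- `DeltaDown σ m = Π′^m_{m-1} * Π′^m_{m-2} * ⋯ * Π′^m_1`. -/
def DeltaDown {G : Type*} [Group G] (σ : ℕ → G) (m : ℕ) : G :=
  ((List.range (m - 1)).map (fun k => PiDown σ m (m - 1 - k))).prod

/-- `Theta σ m = σ m · Π′^m_{m-1} · Π^m_{m-1} · σ m · Π′^m_{m-2} · Π^m_{m-2} ⋯ σ m · Π′^m_1 · Π^m_1 · σ m`. -/
def Theta {G : Type*} [Group G] (σ : ℕ → G) (m : ℕ) : G :=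
  σ m * ((List.range (m - 1)).map
    (fun k => PiDown σ m (m - 1 - k) * PiUp σ m (m - 1 - k) * σ m)).prod

/-- The product of the braid word given by a list of letters `(i, ε)`,
where `(i, true)` stands for `σ i` and `(i, false)` for `σ i ⁻¹`. -/
def wordProd {G : Type*} [Group G] (σ : ℕ → G) (w : List (ℕ × Bool)) : G :=
  (w.map (fun p => if p.2 then σ p.1 else (σ p.1)⁻¹)).prod

namespace BraidConjAux

variable {G : Type*} [Group G]

/-- ascending chain `σ lo * σ (lo+1) * ⋯ * σ (lo+len-1)` -/
def asc (σ : ℕ → G) (lo len : ℕ) : G := ((List.range len).map (fun t => σ (lo + t))).prod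

/-- descending chain `σ top * σ (top-1) * ⋯ * σ (top-len+1)` -/
def desc (σ : ℕ → G) (top len : ℕ) : G := ((List.range len).map (fun t => σ (top - t))).prod

/-- `q` rows, row `k` being the descending chain of length `p` with top `a+k`. -/
def Mw (σ : ℕ → G) (a p q : ℕ) : G := ((List.range q).map (fun k => desc σ (a + k) p)).prod

/-- half twist on generators `σ c, …, σ b`. -/
def HT (σ : ℕ → G) (b c : ℕ) : G :=
  ((List.range (b + 1 - c)).map (fun j => desc σ b (b + 1 - (c + j)))).prod

def Phi (σ : ℕ → G) (a r : ℕ) : G :=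
  σ a * ((List.range r).map (fun k => desc σ (a-1) (r-k) * asc σ (a+1) (r-k) * σ a)).prod

lemma prod_range_succ_left' (f g : ℕ → G) (n : ℕ) (h : ∀ t, t < n → f (t+1) = g t) :
    ((List.range (n+1)).map f).prod = f 0 * ((List.range n).map g).prod := by
  rw [List.range_succ_eq_map, List.map_cons, List.prod_cons, List.map_map]
  congr 1
  congr 1
  apply List.map_congr_left
  intro t ht
  exact h t (List.mem_range.mp ht)

lemma prod_range_succ_right (f : ℕ → G) (n : ℕ) :
    ((List.range (n+1)).map f).prod = ((List.range n).map f).prod * f n := by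
  rw [List.range_succ, List.map_append, List.prod_append]; simp

lemma prod_range_congr (f g : ℕ → G) (n : ℕ) (h : ∀ t, t < n → f t = g t) :
    ((List.range n).map f).prod = ((List.range n).map g).prod := by
  congr 1
  apply List.map_congr_left
  intro t ht
  exact h t (List.mem_range.mp ht)

lemma comm_prod_left (g : G) (l : List G) (h : ∀ x ∈ l, g * x = x * g) :
    g * l.prod = l.prod * g := by
  induction l with
  | nil => simp
  | cons x xs ih =>
    rw [List.prod_cons, ← mul_assoc, h x (by simp), mul_assoc,
      ih (fun y hy => h y (by simp [hy])), ← mul_assoc]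

@[simp] lemma asc_zero (σ : ℕ → G) (lo : ℕ) : asc σ lo 0 = 1 := by simp [asc]
@[simp] lemma desc_zero (σ : ℕ → G) (top : ℕ) : desc σ top 0 = 1 := by simp [desc]
@[simp] lemma Mw_zero (σ : ℕ → G) (a p : ℕ) : Mw σ a p 0 = 1 := by simp [Mw]
@[simp] lemma asc_one (σ : ℕ → G) (lo : ℕ) : asc σ lo 1 = σ lo := by
  simp [asc, List.range_succ]
@[simp] lemma desc_one (σ : ℕ → G) (top : ℕ) : desc σ top 1 = σ top := by
  simp [desc, List.range_succ]

lemma asc_succ (σ : ℕ → G) (lo len : ℕ) :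
    asc σ lo (len+1) = σ lo * asc σ (lo+1) len :=
  prod_range_succ_left' (fun t => σ (lo + t)) (fun t => σ (lo + 1 + t)) len
    (fun t _ => by show σ (lo + (t+1)) = σ (lo + 1 + t); rw [show lo + (t+1) = lo + 1 + t from by omega])

lemma asc_succ_right (σ : ℕ → G) (lo len : ℕ) :
    asc σ lo (len+1) = asc σ lo len * σ (lo+len) := by
  rw [asc, prod_range_succ_right, asc]

lemma desc_succ (σ : ℕ → G) (top len : ℕ) :
    desc σ top (len+1) = σ top * desc σ (top-1) len :=
  prod_range_succ_left' (fun t => σ (top - t)) (fun t => σ (top - 1 - t)) len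
    (fun t _ => by show σ (top - (t+1)) = σ (top - 1 - t); rw [show top - (t+1) = top - 1 - t from by omega])

lemma Mw_succ (σ : ℕ → G) (a p q : ℕ) :
    Mw σ a p (q+1) = desc σ a p * Mw σ (a+1) p q :=
  prod_range_succ_left' (fun k => desc σ (a + k) p) (fun k => desc σ (a + 1 + k) p) q
    (fun t _ => by show desc σ (a + (t+1)) p = desc σ (a + 1 + t) p; rw [show a + (t+1) = a + 1 + t from by omega])

lemma Phi_succ (σ : ℕ → G) (a r : ℕ) :
    Phi σ a (r+1) = σ a * (desc σ (a-1) (r+1) * asc σ (a+1) (r+1)) * Phi σ a r := by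
  have h := prod_range_succ_left'
    (fun k => desc σ (a-1) (r+1-k) * asc σ (a+1) (r+1-k) * σ a)
    (fun k => desc σ (a-1) (r-k) * asc σ (a+1) (r-k) * σ a) r
    (fun t _ => by show desc σ (a-1) (r+1-(t+1)) * asc σ (a+1) (r+1-(t+1)) * σ a = desc σ (a-1) (r-t) * asc σ (a+1) (r-t) * σ a; rw [show r + 1 - (t+1) = r - t from by omega])
  rw [Phi, h, Phi]
  have e0 : r + 1 - 0 = r + 1 := by omega
  simp only [e0]
  group

lemma HT_peel (σ : ℕ → G) (b c : ℕ) (hcb : c ≤ b) :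
    HT σ b c = desc σ b (b+1-c) * HT σ b (c+1) := by
  have h1 : b + 1 - c = (b - c) + 1 := by omega
  have h2 : b + 1 - (c+1) = b - c := by omega
  rw [HT, HT, h2, h1]
  rw [prod_range_succ_left' (fun j => desc σ b (b + 1 - (c + j)))
    (fun j => desc σ b (b + 1 - (c + 1 + j))) (b-c)
    (fun t _ => by show desc σ b (b+1-(c+(t+1))) = desc σ b (b+1-(c+1+t)); rw [show c + (t+1) = c + 1 + t from by omega])]
  congr 2 <;> omega

lemma HT_empty (σ : ℕ → G) (b c : ℕ) (h : b + 1 ≤ c) : HT σ b c = 1 := by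
  have h0 : b + 1 - c = 0 := by omega
  simp [HT, h0]

lemma HT_self (σ : ℕ → G) (b : ℕ) : HT σ b b = σ b := by
  rw [HT_peel σ b b le_rfl, HT_empty σ b (b+1) le_rfl]
  have h1 : b + 1 - b = 1 := by omega
  rw [h1]
  simp

lemma sigma_comm_asc {σ : ℕ → G}
    (j lo len : ℕ) (h : ∀ t, t < len → σ j * σ (lo + t) = σ (lo + t) * σ j) :
    σ j * asc σ lo len = asc σ lo len * σ j := by
  apply comm_prod_left
  intro x hx
  obtain ⟨t, ht, rfl⟩ := List.mem_map.mp hx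
  exact h t (List.mem_range.mp ht)

lemma sigma_comm_desc {σ : ℕ → G}
    (j top len : ℕ) (h : ∀ t, t < len → σ j * σ (top - t) = σ (top - t) * σ j) :
    σ j * desc σ top len = desc σ top len * σ j := by
  apply comm_prod_left
  intro x hx
  obtain ⟨t, ht, rfl⟩ := List.mem_map.mp hx
  exact h t (List.mem_range.mp ht)

lemma asc_comm_desc {σ : ℕ → G} (lo len top len' : ℕ)
    (h : ∀ t s, t < len → s < len' → σ (lo + t) * σ (top - s) = σ (top - s) * σ (lo + t)) :
    asc σ lo len * desc σ top len' = desc σ top len' * asc σ lo len := by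
  refine comm_prod_left (asc σ lo len) ((List.range len').map (fun t => σ (top - t))) ?_
  intro x hx
  obtain ⟨s, hs, rfl⟩ := List.mem_map.mp hx
  exact (sigma_comm_asc (top - s) lo len
    (fun t ht => (h t s ht (List.mem_range.mp hs)).symm)).symm

lemma theta_eq_Phi (σ : ℕ → G) (m : ℕ) : Theta σ m = Phi σ m (m-1) := rfl

section WithRelations

variable {m : ℕ} {σ : ℕ → G}
  (hcomm : ∀ i j, 1 ≤ i → j ≤ 2 * m - 1 → i + 2 ≤ j → σ i * σ j = σ j * σ i)
  (hbraid : ∀ i, 1 ≤ i → i + 1 ≤ 2 * m - 1 →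
    σ i * σ (i + 1) * σ i = σ (i + 1) * σ i * σ (i + 1))

include hcomm hbraid

set_option linter.unusedVariables false

/-- descending chain shift: `desc · σ (i+1) = σ i · desc` when both indices lie in the chain. -/
lemma desc_shift (len : ℕ) : ∀ top i, len ≤ top → top ≤ 2*m-1 →
    top + 1 ≤ i + len → i + 1 ≤ top →
    desc σ top len * σ (i+1) = σ i * desc σ top len := by
  induction len with
  | zero => intro top i h1 h2 h3 h4; exfalso; omega
  | succ len ih =>
    intro top i h1 h2 h3 h4
    rw [desc_succ]
    by_cases hi : i + 2 ≤ top
    · have hI := ih (top - 1) i (by omega) (by omega) (by omega) (by omega)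
      have hcom : σ top * σ i = σ i * σ top := (hcomm i top (by omega) h2 (by omega)).symm
      calc σ top * desc σ (top-1) len * σ (i+1)
          = σ top * (desc σ (top-1) len * σ (i+1)) := by group
        _ = σ top * (σ i * desc σ (top-1) len) := by rw [hI]
        _ = (σ top * σ i) * desc σ (top-1) len := by group
        _ = (σ i * σ top) * desc σ (top-1) len := by rw [hcom]
        _ = σ i * (σ top * desc σ (top-1) len) := by group
    · -- i + 1 = top
      have hi1 : i + 1 = top := by omega
      obtain ⟨len', rfl⟩ : ∃ l', len = l' + 1 := ⟨len - 1, by omega⟩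
      rw [desc_succ]
      have hcom : desc σ (top-1-1) len' * σ top = σ top * desc σ (top-1-1) len' := by
        symm
        apply sigma_comm_desc
        intro t ht
        exact (hcomm (top - 1 - 1 - t) top (by omega) h2 (by omega)).symm
      have hb : σ (top-1) * σ top * σ (top-1) = σ top * σ (top-1) * σ top := by
        have hh := hbraid (top-1) (by omega) (by omega)
        have e : top - 1 + 1 = top := by omega
        rw [e] at hh
        exact hh
      have hi' : i = top - 1 := by omega
      rw [hi1, hi']
      calc σ top * (σ (top-1) * desc σ (top-1-1) len') * σ top
          = σ top * σ (top-1) * (desc σ (top-1-1) len' * σ top) := by group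
        _ = σ top * σ (top-1) * (σ top * desc σ (top-1-1) len') := by rw [hcom]
        _ = (σ top * σ (top-1) * σ top) * desc σ (top-1-1) len' := by group
        _ = (σ (top-1) * σ top * σ (top-1)) * desc σ (top-1-1) len' := by rw [hb]
        _ = σ (top-1) * (σ top * (σ (top-1) * desc σ (top-1-1) len')) := by group

/-- ascending chain shift: `asc · σ i = σ (i+1) · asc` when both indices lie in the chain. -/
lemma asc_shift (len : ℕ) : ∀ lo i, 1 ≤ lo → lo + len ≤ 2*m →
    lo ≤ i → i + 2 ≤ lo + len →
    asc σ lo len * σ i = σ (i+1) * asc σ lo len := by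
  induction len with
  | zero => intro lo i h1 h2 h3 h4; exfalso; omega
  | succ len ih =>
    intro lo i h1 h2 h3 h4
    rw [asc_succ]
    by_cases hi : lo + 1 ≤ i
    · have hI := ih (lo+1) i (by omega) (by omega) (by omega) (by omega)
      have hcom : σ lo * σ (i+1) = σ (i+1) * σ lo := hcomm lo (i+1) h1 (by omega) (by omega)
      calc σ lo * asc σ (lo+1) len * σ i
          = σ lo * (asc σ (lo+1) len * σ i) := by group
        _ = σ lo * (σ (i+1) * asc σ (lo+1) len) := by rw [hI]
        _ = (σ lo * σ (i+1)) * asc σ (lo+1) len := by group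
        _ = (σ (i+1) * σ lo) * asc σ (lo+1) len := by rw [hcom]
        _ = σ (i+1) * (σ lo * asc σ (lo+1) len) := by group
    · have hi0 : i = lo := by omega
      obtain ⟨len', rfl⟩ : ∃ l', len = l' + 1 := ⟨len - 1, by omega⟩
      rw [asc_succ]
      have hcom : σ lo * asc σ (lo+1+1) len' = asc σ (lo+1+1) len' * σ lo := by
        apply sigma_comm_asc
        intro t ht
        exact hcomm lo (lo+1+1+t) h1 (by omega) (by omega)
      have hb : σ lo * σ (lo+1) * σ lo = σ (lo+1) * σ lo * σ (lo+1) :=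
        hbraid lo h1 (by omega)
      rw [hi0]
      calc σ lo * (σ (lo+1) * asc σ (lo+1+1) len') * σ lo
          = σ lo * σ (lo+1) * (asc σ (lo+1+1) len' * σ lo) := by group
        _ = σ lo * σ (lo+1) * (σ lo * asc σ (lo+1+1) len') := by rw [← hcom]
        _ = (σ lo * σ (lo+1) * σ lo) * asc σ (lo+1+1) len' := by group
        _ = (σ (lo+1) * σ lo * σ (lo+1)) * asc σ (lo+1+1) len' := by rw [hb]
        _ = σ (lo+1) * (σ lo * (σ (lo+1) * asc σ (lo+1+1) len')) := by group

/-- absorbing an ascending chain into `Mw`, making rows longer. -/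
lemma asc_Mw (q : ℕ) : ∀ a p, 1 ≤ p → p ≤ a → a + q ≤ 2*m - 1 →
    asc σ (a+1) q * Mw σ a p q = Mw σ (a+1) (p+1) q := by
  induction q with
  | zero => intro a p _ _ _; simp
  | succ q ih =>
    intro a p hp hpa hq
    rw [asc_succ, Mw_succ, Mw_succ]
    have hcom : asc σ (a+1+1) q * desc σ a p = desc σ a p * asc σ (a+1+1) q := by
      apply asc_comm_desc
      intro t s ht hs
      exact (hcomm (a - s) (a+1+1+t) (by omega) (by omega) (by omega)).symm
    have hd : desc σ (a+1) (p+1) = σ (a+1) * desc σ a p := by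
      rw [desc_succ, show a + 1 - 1 = a from by omega]
    have hI := ih (a+1) p hp (by omega) (by omega)
    rw [hd]
    calc σ (a+1) * asc σ (a+1+1) q * (desc σ a p * Mw σ (a+1) p q)
        = σ (a+1) * (asc σ (a+1+1) q * desc σ a p) * Mw σ (a+1) p q := by group
      _ = σ (a+1) * (desc σ a p * asc σ (a+1+1) q) * Mw σ (a+1) p q := by rw [hcom]
      _ = σ (a+1) * desc σ a p * (asc σ (a+1+1) q * Mw σ (a+1) p q) := by group
      _ = σ (a+1) * desc σ a p * Mw σ (a+1+1) (p+1) q := by rw [hI]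

/-- `Phi m r` equals the block-crossing normal form `Mw`. -/
lemma Phi_eq_Mw (hm : 1 ≤ m) : ∀ r, r ≤ m - 1 → Phi σ m r = Mw σ m (r+1) (r+1) := by
  intro r
  induction r with
  | zero =>
    intro _
    rw [Mw_succ, Phi]
    simp
  | succ r ih =>
    intro hr
    rw [Phi_succ, ih (by omega)]
    have hA := asc_Mw hcomm hbraid (r+1) m (r+1) (by omega) (by omega) (by omega)
    have hd : desc σ m (r+2) = σ m * desc σ (m-1) (r+1) := desc_succ σ m (r+1)
    calc σ m * (desc σ (m-1) (r+1) * asc σ (m+1) (r+1)) * Mw σ m (r+1) (r+1)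
        = (σ m * desc σ (m-1) (r+1)) * (asc σ (m+1) (r+1) * Mw σ m (r+1) (r+1)) := by group
      _ = desc σ m (r+2) * Mw σ (m+1) (r+2) (r+1) := by rw [← hd, hA]
      _ = Mw σ m (r+2) (r+2) := (Mw_succ σ m (r+2) (r+1)).symm

/-- pushing a single generator through `Mw` from the left shifts its index up by `q`. -/
lemma push_Mw (q : ℕ) : ∀ a p j, a + 1 ≤ j + p → j + 1 ≤ a → p ≤ a → a + q ≤ 2*m →
    σ j * Mw σ a p q = Mw σ a p q * σ (j + q) := by
  induction q with
  | zero => intro a p j _ _ _ _; simp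
  | succ q ih =>
    intro a p j h1 h2 h3 h4
    rw [Mw_succ]
    have hs := (desc_shift hcomm hbraid p a j h3 (by omega) h1 h2).symm
    have hI := ih (a+1) p (j+1) (by omega) (by omega) (by omega) (by omega)
    have e : j + 1 + q = j + (q+1) := by omega
    calc σ j * (desc σ a p * Mw σ (a+1) p q)
        = (σ j * desc σ a p) * Mw σ (a+1) p q := by group
      _ = desc σ a p * (σ (j+1) * Mw σ (a+1) p q) := by rw [hs]; group
      _ = desc σ a p * (Mw σ (a+1) p q * σ (j+1+q)) := by rw [hI]
      _ = desc σ a p * Mw σ (a+1) p q * σ (j + (q+1)) := by rw [e]; group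

/-- pushing a generator through `Θ` from the left shifts its index up by `m`. -/
lemma theta_push (j : ℕ) (h1 : 1 ≤ j) (h2 : j ≤ m - 1) (hm : 2 ≤ m) :
    σ j * Theta σ m = Theta σ m * σ (j + m) := by
  rw [theta_eq_Phi, Phi_eq_Mw hcomm hbraid (by omega) (m-1) le_rfl]
  have e : m - 1 + 1 = m := by omega
  rw [e]
  exact push_Mw hcomm hbraid m m m j (by omega) (by omega) le_rfl (by omega)

/-- braid identity `desc[b↓c] ⋅ asc[c+1,b] = asc[c,b] ⋅ desc[b-1↓c]`. -/
lemma ident_I (n : ℕ) : ∀ b c, b = c + n → 1 ≤ c → b ≤ 2*m - 1 →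
    desc σ b (b+1-c) * asc σ (c+1) (b-c) = asc σ c (b+1-c) * desc σ (b-1) (b-c) := by
  induction n with
  | zero =>
    intro b c hb hc hb2
    have e1 : b + 1 - c = 1 := by omega
    have e2 : b - c = 0 := by omega
    have e3 : c = b := by omega
    rw [e1, e2, e3]
    simp
  | succ n ih =>
    intro b c hb hc hb2
    have e1 : b + 1 - c = (n+1) + 1 := by omega
    have e2 : b - c = n + 1 := by omega
    have hI := ih (b-1) c (by omega) hc (by omega)
    have f1 : b - 1 + 1 - c = n + 1 := by omega
    have f2 : b - 1 - c = n := by omega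
    rw [f1, f2] at hI
    have hcom1 : σ b * desc σ (b-1-1) n = desc σ (b-1-1) n * σ b := by
      apply sigma_comm_desc
      intro t ht
      exact (hcomm (b-1-1-t) b (by omega) hb2 (by omega)).symm
    have hcom2 : σ b * asc σ c n = asc σ c n * σ b := by
      apply sigma_comm_asc
      intro t ht
      exact (hcomm (c+t) b (by omega) hb2 (by omega)).symm
    have hb' : σ (b-1) * σ b * σ (b-1) = σ b * σ (b-1) * σ b := by
      have hh := hbraid (b-1) (by omega) (by omega)
      have e : b - 1 + 1 = b := by omega
      rw [e] at hh
      exact hh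
    have ecn : c + n = b - 1 := by omega
    have ecn1 : c + 1 + n = b := by omega
    have hA1 : asc σ c (n+1) = asc σ c n * σ (b-1) := by
      rw [asc_succ_right, ecn]
    have hA2 : asc σ c ((n+1)+1) = asc σ c n * σ (b-1) * σ b := by
      rw [asc_succ_right σ c (n+1), hA1]
      have e : c + (n+1) = b := by omega
      rw [e]
    have hD1 : desc σ (b-1) (n+1) = σ (b-1) * desc σ (b-1-1) n := desc_succ σ (b-1) n
    rw [e1, e2, desc_succ σ b (n+1), asc_succ_right σ (c+1) n, ecn1]
    calc σ b * desc σ (b-1) (n+1) * (asc σ (c+1) n * σ b)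
        = σ b * (desc σ (b-1) (n+1) * asc σ (c+1) n) * σ b := by group
      _ = σ b * (asc σ c (n+1) * desc σ (b-1-1) n) * σ b := by rw [hI]
      _ = σ b * asc σ c (n+1) * (desc σ (b-1-1) n * σ b) := by group
      _ = σ b * asc σ c (n+1) * (σ b * desc σ (b-1-1) n) := by rw [← hcom1]
      _ = σ b * (asc σ c n * σ (b-1)) * σ b * desc σ (b-1-1) n := by rw [hA1]; group
      _ = (σ b * asc σ c n) * (σ (b-1) * σ b) * desc σ (b-1-1) n := by group
      _ = asc σ c n * (σ b * σ (b-1) * σ b) * desc σ (b-1-1) n := by rw [hcom2]; group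
      _ = asc σ c n * (σ (b-1) * σ b * σ (b-1)) * desc σ (b-1-1) n := by rw [← hb']
      _ = (asc σ c n * σ (b-1) * σ b) * (σ (b-1) * desc σ (b-1-1) n) := by group
      _ = asc σ c ((n+1)+1) * desc σ (b-1) (n+1) := by rw [hA2, hD1]

/-- alternate decomposition of the half twist. -/
lemma HT_A (n : ℕ) : ∀ b c, b = c + n → 1 ≤ c → b ≤ 2*m - 1 →
    HT σ b c = asc σ c (b+1-c) * HT σ (b-1) c := by
  induction n with
  | zero =>
    intro b c hb hc hb2
    have e1 : b + 1 - c = 1 := by omega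
    have e3 : c = b := by omega
    rw [e1, e3, HT_self, HT_empty σ (b-1) b (by omega), asc_one]
    simp
  | succ n ih =>
    intro b c hb hc hb2
    rw [HT_peel σ b c (by omega), ih b (c+1) (by omega) (by omega) hb2]
    have e1 : b + 1 - (c+1) = b - c := by omega
    rw [e1]
    have hI := ident_I hcomm hbraid (n+1) b c hb hc hb2
    have hpeel : HT σ (b-1) c = desc σ (b-1) (b-c) * HT σ (b-1) (c+1) := by
      have hp := HT_peel σ (b-1) c (by omega)
      have e2 : b - 1 + 1 - c = b - c := by omega
      rw [e2] at hp
      exact hp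
    calc desc σ b (b+1-c) * (asc σ (c+1) (b-c) * HT σ (b-1) (c+1))
        = (desc σ b (b+1-c) * asc σ (c+1) (b-c)) * HT σ (b-1) (c+1) := by group
      _ = (asc σ c (b+1-c) * desc σ (b-1) (b-c)) * HT σ (b-1) (c+1) := by rw [hI]
      _ = asc σ c (b+1-c) * (desc σ (b-1) (b-c) * HT σ (b-1) (c+1)) := by group
      _ = asc σ c (b+1-c) * HT σ (b-1) c := by rw [← hpeel]

/-- half twist conjugation: `HT b c` reverses the generators `σ c, …, σ b`. -/
lemma HT_B (n : ℕ) : ∀ b c i, b = c + n → 1 ≤ c → b ≤ 2*m - 1 → c ≤ i → i ≤ b →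
    HT σ b c * σ i = σ (b + c - i) * HT σ b c := by
  induction n with
  | zero =>
    intro b c i hb hc hb2 hi1 hi2
    have e : b = c := by omega
    subst e
    have e2 : i = b := by omega
    subst e2
    have e3 : i + i - i = i := by omega
    rw [e3, HT_self]
  | succ n ih =>
    intro b c i hb hc hb2 hi1 hi2
    by_cases hi : c + 1 ≤ i
    · rw [HT_peel σ b c (by omega)]
      have hI := ih b (c+1) i (by omega) (by omega) hb2 hi hi2
      have e : b + (c+1) - i = (b + c - i) + 1 := by omega
      rw [e] at hI
      have hs := desc_shift hcomm hbraid (b+1-c) b (b+c-i) (by omega) hb2 (by omega) (by omega)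
      calc desc σ b (b+1-c) * HT σ b (c+1) * σ i
          = desc σ b (b+1-c) * (HT σ b (c+1) * σ i) := by group
        _ = desc σ b (b+1-c) * (σ (b+c-i+1) * HT σ b (c+1)) := by rw [hI]
        _ = (desc σ b (b+1-c) * σ (b+c-i+1)) * HT σ b (c+1) := by group
        _ = (σ (b+c-i) * desc σ b (b+1-c)) * HT σ b (c+1) := by rw [hs]
        _ = σ (b+c-i) * (desc σ b (b+1-c) * HT σ b (c+1)) := by group
    · have hi0 : i = c := by omega
      have e2 : b + c - i = b := by omega
      rw [e2, hi0]
      rw [HT_A hcomm hbraid (n+1) b c hb hc hb2]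
      have hI := ih (b-1) c c (by omega) hc (by omega) le_rfl (by omega)
      have e3 : b - 1 + c - c = b - 1 := by omega
      rw [e3] at hI
      have hs := asc_shift hcomm hbraid (b+1-c) c (b-1) hc (by omega) (by omega) (by omega)
      have e4 : b - 1 + 1 = b := by omega
      rw [e4] at hs
      calc asc σ c (b+1-c) * HT σ (b-1) c * σ c
          = asc σ c (b+1-c) * (HT σ (b-1) c * σ c) := by group
        _ = asc σ c (b+1-c) * (σ (b-1) * HT σ (b-1) c) := by rw [hI]
        _ = (asc σ c (b+1-c) * σ (b-1)) * HT σ (b-1) c := by group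
        _ = (σ b * asc σ c (b+1-c)) * HT σ (b-1) c := by rw [hs]
        _ = σ b * (asc σ c (b+1-c) * HT σ (b-1) c) := by group

lemma DeltaDown_eq_HT (hm : 2 ≤ m) : DeltaDown σ m = HT σ (m-1) 1 := by
  rw [DeltaDown, HT]
  have e : m - 1 + 1 - 1 = m - 1 := by omega
  rw [e]
  apply prod_range_congr
  intro t ht
  show PiDown σ m (m-1-t) = desc σ (m-1) (m-1+1-(1+t))
  have e2 : m - 1 + 1 - (1+t) = m - 1 - t := by omega
  rw [e2]
  rfl

lemma DeltaDown_conj (i : ℕ) (hm : 2 ≤ m) (h1 : 1 ≤ i) (h2 : i ≤ m - 1) :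
    DeltaDown σ m * σ i = σ (m - i) * DeltaDown σ m := by
  rw [DeltaDown_eq_HT hcomm hbraid hm]
  have hB := HT_B hcomm hbraid (m-2) (m-1) 1 i (by omega) le_rfl (by omega) h1 h2
  have e : m - 1 + 1 - i = m - i := by omega
  rw [e] at hB
  exact hB

lemma sigma_comm_DeltaUp (j : ℕ) (h1 : 1 ≤ j) (h2 : j ≤ m - 1) :
    σ j * DeltaUp σ m = DeltaUp σ m * σ j := by
  rw [DeltaUp]
  apply comm_prod_left
  intro x hx
  obtain ⟨k, hk, rfl⟩ := List.mem_map.mp hx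
  have hk' := List.mem_range.mp hk
  show σ j * asc σ (m+1) (m-1-k) = asc σ (m+1) (m-1-k) * σ j
  apply sigma_comm_asc
  intro t ht
  exact hcomm j (m+1+t) h1 (by omega) (by omega)

/-- The key single-generator conjugation. -/
lemma gen_conj (i : ℕ) (h1 : 1 ≤ i) (h2 : i ≤ m - 1) :
    σ i * ((DeltaDown σ m)⁻¹ * (DeltaUp σ m)⁻¹ * Theta σ m) =
      ((DeltaDown σ m)⁻¹ * (DeltaUp σ m)⁻¹ * Theta σ m) * σ (2*m - i) := by
  have hm : 2 ≤ m := by omega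
  have s1 : DeltaDown σ m * σ i = σ (m - i) * DeltaDown σ m :=
    DeltaDown_conj hcomm hbraid i hm h1 h2
  have s1' : σ i * (DeltaDown σ m)⁻¹ = (DeltaDown σ m)⁻¹ * σ (m - i) := by
    calc σ i * (DeltaDown σ m)⁻¹
        = (DeltaDown σ m)⁻¹ * (DeltaDown σ m * σ i) * (DeltaDown σ m)⁻¹ := by group
      _ = (DeltaDown σ m)⁻¹ * (σ (m-i) * DeltaDown σ m) * (DeltaDown σ m)⁻¹ := by rw [s1]
      _ = (DeltaDown σ m)⁻¹ * σ (m-i) := by group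
  have s2 : σ (m-i) * DeltaUp σ m = DeltaUp σ m * σ (m-i) :=
    sigma_comm_DeltaUp hcomm hbraid (m-i) (by omega) (by omega)
  have s2' : σ (m-i) * (DeltaUp σ m)⁻¹ = (DeltaUp σ m)⁻¹ * σ (m-i) := by
    calc σ (m-i) * (DeltaUp σ m)⁻¹
        = (DeltaUp σ m)⁻¹ * (DeltaUp σ m * σ (m-i)) * (DeltaUp σ m)⁻¹ := by group
      _ = (DeltaUp σ m)⁻¹ * (σ (m-i) * DeltaUp σ m) * (DeltaUp σ m)⁻¹ := by rw [← s2]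
      _ = (DeltaUp σ m)⁻¹ * σ (m-i) := by group
  have s3 : σ (m-i) * Theta σ m = Theta σ m * σ (2*m - i) := by
    have hh := theta_push hcomm hbraid (m-i) (by omega) (by omega) hm
    have e : m - i + m = 2*m - i := by omega
    rw [e] at hh
    exact hh
  calc σ i * ((DeltaDown σ m)⁻¹ * (DeltaUp σ m)⁻¹ * Theta σ m)
      = (σ i * (DeltaDown σ m)⁻¹) * (DeltaUp σ m)⁻¹ * Theta σ m := by group
    _ = (DeltaDown σ m)⁻¹ * (σ (m-i) * (DeltaUp σ m)⁻¹) * Theta σ m := by rw [s1']; group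
    _ = (DeltaDown σ m)⁻¹ * ((DeltaUp σ m)⁻¹ * (σ (m-i) * Theta σ m)) := by rw [s2']; group
    _ = (DeltaDown σ m)⁻¹ * ((DeltaUp σ m)⁻¹ * (Theta σ m * σ (2*m-i))) := by rw [s3]
    _ = ((DeltaDown σ m)⁻¹ * (DeltaUp σ m)⁻¹ * Theta σ m) * σ (2*m-i) := by group

end WithRelations

end BraidConjAux

theorem conj_word_to_second_block {G : Type*} [Group G] (m : ℕ) (hm : 1 ≤ m)
    (σ : ℕ → G)
    (hcomm : ∀ i j, 1 ≤ i → j ≤ 2 * m - 1 → i + 2 ≤ j → σ i * σ j = σ j * σ i)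
    (hbraid : ∀ i, 1 ≤ i → i + 1 ≤ 2 * m - 1 →
      σ i * σ (i + 1) * σ i = σ (i + 1) * σ i * σ (i + 1))
    (w : List (ℕ × Bool)) (hw : ∀ p ∈ w, 1 ≤ p.1 ∧ p.1 ≤ m - 1) :
    wordProd σ w * ((DeltaDown σ m)⁻¹ * (DeltaUp σ m)⁻¹ * Theta σ m) =
      ((DeltaDown σ m)⁻¹ * (DeltaUp σ m)⁻¹ * Theta σ m) *
        wordProd σ (w.map (fun p => (2 * m - p.1, p.2))) := by
  induction w with
  | nil => simp [wordProd]
  | cons p w ih =>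
    have hp := hw p List.mem_cons_self
    have hgen := BraidConjAux.gen_conj hcomm hbraid p.1 hp.1 hp.2
    set W := (DeltaDown σ m)⁻¹ * (DeltaUp σ m)⁻¹ * Theta σ m with hW
    have hletter : (if p.2 then σ p.1 else (σ p.1)⁻¹) * W =
        W * (if p.2 then σ (2*m - p.1) else (σ (2*m - p.1))⁻¹) := by
      by_cases hb : p.2
      · simp only [hb, if_true]
        exact hgen
      · simp only [hb, if_false]
        calc (σ p.1)⁻¹ * W
            = (σ p.1)⁻¹ * (σ p.1 * W) * (σ (2*m - p.1))⁻¹ := by rw [hgen]; group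
          _ = W * (σ (2*m - p.1))⁻¹ := by group
    have ihw := ih (fun q hq => hw q (List.mem_cons_of_mem _ hq))
    have hcons : wordProd σ (p :: w) = (if p.2 then σ p.1 else (σ p.1)⁻¹) * wordProd σ w := by
      simp [wordProd]
    have hcons2 : wordProd σ ((p :: w).map (fun q => (2*m - q.1, q.2))) =
        (if p.2 then σ (2*m - p.1) else (σ (2*m - p.1))⁻¹) *
          wordProd σ (w.map (fun q => (2*m - q.1, q.2))) := by
      simp [wordProd]
    rw [hcons, hcons2]
    calc (if p.2 then σ p.1 else (σ p.1)⁻¹) * wordProd σ w * W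
        = (if p.2 then σ p.1 else (σ p.1)⁻¹) * (wordProd σ w * W) := by group
      _ = (if p.2 then σ p.1 else (σ p.1)⁻¹) *
            (W * wordProd σ (w.map (fun q => (2*m - q.1, q.2)))) := by rw [ihw]
      _ = ((if p.2 then σ p.1 else (σ p.1)⁻¹) * W) *
            wordProd σ (w.map (fun q => (2*m - q.1, q.2))) := by group
      _ = W * ((if p.2 then σ (2*m - p.1) else (σ (2*m - p.1))⁻¹) *
            wordProd σ (w.map (fun q => (2*m - q.1, q.2)))) := by rw [hletter]; group
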